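/- Let q be a prime power and t a positive integer, and let f(x) = x^t on GF(q). Then every codeword c(a,b) = ((a·x^t + b·x)_{x ∈ GF(q)*}, b, a) with (a,b) ≠ (0,0) has Hamming weight exactly q (equivalently, y·x^t ≠ x·y^t for all distinct x, y ∈ GF(q)*) if and only if gcd(q−1, t−1) = 1. -/
import Mathlib


/-- The codeword `c(a,b)` of the code `C_{(f,q)}` with `f(x) = x^t`: coordinates
`a·x^t + b·x` for each nonzero `x` of `F = GF(q)`, followed by `b` and `a`. -/
def monomialCodeword {F : Type*} [Field F] (t : ℕ) (a b : F) :
    ({x : F // x ≠ 0} ⊕ Fin 2) → F :=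
  Sum.elim (fun x => a * x.1 ^ t + b * x.1) ![b, a]

private lemma inj_iff_gcd {F : Type*} [Field F] [Fintype F] [DecidableEq F] (k : ℕ) :
    (∀ x y : F, x ≠ 0 → y ≠ 0 → x ^ k = y ^ k → x = y) ↔
      Nat.gcd (Fintype.card F - 1) k = 1 := by
  have hcard : Nat.card Fˣ = Fintype.card F - 1 := by
    rw [Nat.card_eq_fintype_card, Fintype.card_units]
  constructor
  · intro h
    by_contra hd
    set d := Nat.gcd (Fintype.card F - 1) k with hdd
    obtain ⟨g, hg⟩ := IsCyclic.exists_ofOrder_eq_natCard (α := Fˣ)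
    have hord : orderOf g ≠ 0 := by
      rw [hg]; exact Nat.card_pos.ne'
    have hu : orderOf (g ^ (orderOf g / d)) = d :=
      orderOf_pow_orderOf_div hord (by rw [hg, hcard]; exact Nat.gcd_dvd_left _ _)
    set u := g ^ (orderOf g / d) with hudef
    have hu1 : u ^ k = 1 := orderOf_dvd_iff_pow_eq_one.mp (hu ▸ Nat.gcd_dvd_right _ _)
    have hu1' : ((u : F)) ^ k = (1 : F) ^ k := by
      rw [one_pow, ← Units.val_pow_eq_pow_val, hu1, Units.val_one]
    have := h (u : F) 1 (Units.ne_zero u) one_ne_zero hu1'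
    have : u = 1 := Units.ext (by simpa using this)
    rw [this, orderOf_one] at hu
    exact hd hu.symm
  · intro h x y hx hy hxy
    have h' : Nat.Coprime (Nat.card Fˣ) k := by rwa [hcard]
    have := (powCoprime h').injective (a₁ := Units.mk0 x hx) (a₂ := Units.mk0 y hy)
      (Units.ext (by simpa [powCoprime] using hxy))
    simpa using congrArg Units.val this

private lemma hn_codeword {F : Type*} [Field F] [Fintype F] [DecidableEq F]
    (t : ℕ) (a b : F) :
    hammingNorm (monomialCodeword t a b) =
      (Finset.univ.filter fun x : {x : F // x ≠ 0} => a * x.1 ^ t + b * x.1 ≠ 0).card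
        + ((if b ≠ 0 then 1 else 0) + (if a ≠ 0 then 1 else 0)) := by
  classical
  show (Finset.univ.filter fun i => monomialCodeword t a b i ≠ 0).card = _
  rw [Finset.card_filter, Fintype.sum_sum_type, ← Finset.card_filter]
  congr 1

theorem stmt1 {F : Type*} [Field F] [Fintype F] [DecidableEq F] (t : ℕ) (ht : 0 < t) :
    ((∀ a b : F, (a, b) ≠ (0, 0) →
        hammingNorm (monomialCodeword t a b) = Fintype.card F) ↔
      Nat.gcd (Fintype.card F - 1) (t - 1) = 1) ∧
    ((∀ x y : F, x ≠ 0 → y ≠ 0 → x ≠ y → y * x ^ t ≠ x * y ^ t) ↔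
      Nat.gcd (Fintype.card F - 1) (t - 1) = 1) := by
  classical
  obtain ⟨k, rfl⟩ : ∃ k, t = k + 1 := ⟨t - 1, (Nat.succ_pred_eq_of_pos ht).symm⟩
  have hk1 : k + 1 - 1 = k := rfl
  rw [hk1]
  have hq1 : (1 : ℕ) ≤ Fintype.card F := Fintype.card_pos
  have hq2 : (2 : ℕ) ≤ Fintype.card F := Fintype.one_lt_card
  have hcnz : Fintype.card {x : F // x ≠ 0} = Fintype.card F - 1 := by
    simpa using Fintype.card_subtype_compl (fun x : F => x = 0)
  constructor
  · -- weight statement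
    rw [← inj_iff_gcd]
    constructor
    · intro H x y hx hy hxy
      by_contra hne
      -- build a codeword with two zero inl-coordinates
      have hw := H 1 (-(x ^ k)) (by simp)
      rw [hn_codeword] at hw
      have hzero : ∀ z : F, z ≠ 0 → z ^ k = x ^ k →
          (1 : F) * z ^ (k + 1) + -(x ^ k) * z = 0 := by
        intro z hz hzk
        rw [one_mul, pow_succ, ← hzk]; ring
      have hsub : (Finset.univ.filter fun z : {x : F // x ≠ 0} =>
          (1 : F) * z.1 ^ (k + 1) + -(x ^ k) * z.1 ≠ 0) ⊆
          Finset.univ \ {⟨x, hx⟩, ⟨y, hy⟩} := by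
        intro z hz
        simp only [Finset.mem_filter, Finset.mem_univ, true_and] at hz
        simp only [Finset.mem_sdiff, Finset.mem_univ, Finset.mem_insert,
          Finset.mem_singleton, true_and]
        push_neg
        constructor
        · rintro rfl; exact hz (hzero x hx rfl)
        · rintro rfl; exact hz (hzero y hy hxy.symm)
      have hcard2 : ({⟨x, hx⟩, ⟨y, hy⟩} : Finset {x : F // x ≠ 0}).card = 2 := by
        rw [Finset.card_insert_of_notMem (by simp [hne]), Finset.card_singleton]
      have hle := Finset.card_le_card hsub
      rw [Finset.card_sdiff_of_subset (Finset.subset_univ _), hcard2, Finset.card_univ, hcnz] at hle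
      have hq3 : (3 : ℕ) ≤ Fintype.card F := by
        have : ({⟨x, hx⟩, ⟨y, hy⟩} : Finset {x : F // x ≠ 0}).card ≤
            Fintype.card {x : F // x ≠ 0} := by
          rw [← Finset.card_univ]; exact Finset.card_le_card (Finset.subset_univ _)
        rw [hcard2, hcnz] at this; omega
      have hib : (if (-(x ^ k) : F) ≠ 0 then 1 else 0) ≤ 1 := by split <;> omega
      have hia : (if (1 : F) ≠ 0 then 1 else 0) ≤ 1 := by split <;> omega
      omega
    · intro hinj a b hab
      rw [hn_codeword]
      rcases eq_or_ne a 0 with rfl | ha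
      · have hb : b ≠ 0 := by
          intro h; exact hab (by rw [h])
        have : (Finset.univ.filter fun x : {x : F // x ≠ 0} =>
            (0 : F) * x.1 ^ (k + 1) + b * x.1 ≠ 0) = Finset.univ := by
          apply Finset.filter_true_of_mem
          intro x _
          simp only [zero_mul, zero_add]
          exact mul_ne_zero hb x.2
        rw [this, Finset.card_univ, hcnz]
        simp [hb]
        omega
      · rcases eq_or_ne b 0 with rfl | hb
        · have : (Finset.univ.filter fun x : {x : F // x ≠ 0} =>
              a * x.1 ^ (k + 1) + (0 : F) * x.1 ≠ 0) = Finset.univ := by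
            apply Finset.filter_true_of_mem
            intro x _
            simp only [zero_mul, add_zero]
            exact mul_ne_zero ha (pow_ne_zero _ x.2)
          rw [this, Finset.card_univ, hcnz]
          simp [ha]
          omega
        · -- both nonzero: exactly one zero coordinate among the inl's
          set c : F := -(b / a) with hc
          have hcne : c ≠ 0 := by
            simp [hc, div_eq_zero_iff, ha, hb]
          -- the k-th power map on nonzero elements is bijective
          have hinj' : Function.Injective
              (fun x : {x : F // x ≠ 0} => (⟨x.1 ^ k, pow_ne_zero _ x.2⟩ : {x : F // x ≠ 0})) := by
            intro x y hxy
            exact Subtype.ext (hinj x.1 y.1 x.2 y.2 (congrArg Subtype.val hxy))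
          have hsurj := Finite.surjective_of_injective hinj'
          obtain ⟨x₀, hx₀⟩ := hsurj ⟨c, hcne⟩
          have hx₀k : x₀.1 ^ k = c := congrArg Subtype.val hx₀
          have key : ∀ z : {x : F // x ≠ 0},
              (a * z.1 ^ (k + 1) + b * z.1 = 0) ↔ z = x₀ := by
            intro z
            constructor
            · intro hz
              have : z.1 ^ k = c := by
                have h1 : z.1 * (a * z.1 ^ k + b) = a * z.1 ^ (k + 1) + b * z.1 := by
                  ring
                rw [hz] at h1
                have h2 : a * z.1 ^ k + b = 0 := by
                  rcases mul_eq_zero.mp h1 with h | h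
                  · exact absurd h z.2
                  · exact h
                have h3 : a * z.1 ^ k = -b := by linear_combination h2
                rw [hc, ← neg_div, eq_div_iff ha]
                linear_combination h3
              exact Subtype.ext (hinj z.1 x₀.1 z.2 x₀.2 (by rw [this, hx₀k]))
            · rintro rfl
              have hac : a * c + b = 0 := by
                rw [hc]; field_simp; ring
              calc a * z.1 ^ (k + 1) + b * z.1 = z.1 * (a * z.1 ^ k + b) := by ring
                _ = z.1 * (a * c + b) := by rw [hx₀k]
                _ = 0 := by rw [hac, mul_zero]
          have hfilter : (Finset.univ.filter fun z : {x : F // x ≠ 0} =>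
              a * z.1 ^ (k + 1) + b * z.1 = 0) = {x₀} := by
            ext z
            simp [key z]
          have hsplit := Finset.card_filter_add_card_filter_not
            (s := (Finset.univ : Finset {x : F // x ≠ 0}))
            (p := fun z => a * z.1 ^ (k + 1) + b * z.1 = 0)
          rw [hfilter, Finset.card_singleton, Finset.card_univ, hcnz] at hsplit
          simp only [ne_eq, ha, hb, not_false_eq_true, if_true]
          simp only [ne_eq] at hsplit ⊢
          omega
  · -- the algebraic statement
    rw [← inj_iff_gcd]
    constructor
    · intro H x y hx hy hxy
      by_contra hne
      refine H x y hx hy hne ?_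
      rw [pow_succ, pow_succ, ← mul_assoc, ← mul_assoc]
      rw [mul_comm y (x ^ k), mul_comm x (y ^ k), mul_assoc, mul_assoc, mul_comm x y, hxy]
    · intro hinj x y hx hy hne h
      refine hne (hinj x y hx hy ?_)
      have hxy : x * y ≠ 0 := mul_ne_zero hx hy
      apply mul_left_cancel₀ hxy
      rw [pow_succ, pow_succ] at h
      calc x * y * x ^ k = y * (x ^ k * x) := by ring
        _ = x * (y ^ k * y) := h
        _ = x * y * y ^ k := by ring
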